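/- arXiv:1602.08177 — 2 statements merged into one kernel-verified Lean document; each statement's English description precedes it below -/
import Mathlib

section
/- Let A be a unital C*-algebra and τ : A → ℂ a faithful positive tracial continuous linear functional. If σ and ρ are τ-states of A, then F_τ(σ, ρ) = 1 if and only if σ = ρ. -/
open scoped ComplexOrder

/-- The absolute value `|x| = (star x * x)^{1/2}` of an element of a C*-algebra,
defined via the continuous functional calculus square root. -/
noncomputable def cstarAbs {A : Type*} [CStarAlgebra A] [PartialOrder A] [StarOrderedRing A]
    (x : A) : A :=
  CFC.sqrt (star x * x)

/-- The τ-fidelity `F_τ(σ, ρ) = τ(|σ^{1/2} ρ^{1/2}|)`, as a real number. -/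
noncomputable def fidelity {A : Type*} [CStarAlgebra A] [PartialOrder A] [StarOrderedRing A]
    (τ : A →L[ℂ] ℂ) (σ ρ : A) : ℝ :=
  (τ (cstarAbs (CFC.sqrt σ * CFC.sqrt ρ))).re

section aux
variable {A : Type*} [CStarAlgebra A] [PartialOrder A] [StarOrderedRing A]
  (τ : A →L[ℂ] ℂ)

lemma tau_nonneg (hpos : ∀ x : A, 0 ≤ τ (star x * x)) {p : A} (hp : 0 ≤ p) : 0 ≤ τ p := by
  have h1 : star (CFC.sqrt p) * CFC.sqrt p = p := by
    rw [(IsSelfAdjoint.of_nonneg (CFC.sqrt_nonneg (a := p))).star_eq,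
      CFC.sqrt_mul_sqrt_self p hp]
  simpa [h1] using hpos (CFC.sqrt p)

lemma tau_real (hpos : ∀ x : A, 0 ≤ τ (star x * x)) {s : A} (hs : IsSelfAdjoint s) :
    (τ s).im = 0 := by
  have h := CFC.posPart_sub_negPart s hs
  have h1 : 0 ≤ τ (s⁺) := tau_nonneg τ hpos (CFC.posPart_nonneg s)
  have h2 : 0 ≤ τ (s⁻) := tau_nonneg τ hpos (CFC.negPart_nonneg s)
  rw [Complex.nonneg_iff] at h1 h2
  rw [← h, map_sub]
  simp [← h1.2, ← h2.2]

lemma tau_star (hpos : ∀ x : A, 0 ≤ τ (star x * x)) (z : A) :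
    τ (star z) = starRingEnd ℂ (τ z) := by
  have hs : IsSelfAdjoint (z + star z) := by
    rw [IsSelfAdjoint, star_add, star_star, add_comm]
  have ht : IsSelfAdjoint (Complex.I • (star z - z)) := by
    rw [IsSelfAdjoint, star_smul, star_sub, star_star]
    simp [smul_sub, sub_eq_iff_eq_add]
    abel
  have h1 := tau_real τ hpos hs
  have h2 := tau_real τ hpos ht
  rw [map_add] at h1
  rw [map_smul, map_sub] at h2
  apply Complex.ext <;>
  · simp only [Complex.conj_re, Complex.conj_im]
    simp only [smul_eq_mul, Complex.add_im, Complex.mul_im, Complex.mul_re,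
      Complex.add_re, Complex.sub_im, Complex.sub_re,
      Complex.I_re, Complex.I_im] at h1 h2 ⊢
    linarith


lemma tau_mono (hpos : ∀ x : A, 0 ≤ τ (star x * x)) {p q : A} (h : p ≤ q) :
    (τ p).re ≤ (τ q).re := by
  have h1 : 0 ≤ τ (q - p) := tau_nonneg τ hpos (sub_nonneg.mpr h)
  rw [map_sub, Complex.nonneg_iff] at h1
  simpa [sub_nonneg] using h1.1

/-- Cauchy-Schwarz for the trace inner product, squared form. -/
lemma tau_cs (hpos : ∀ x : A, 0 ≤ τ (star x * x)) (y z : A) :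
    ‖τ (star y * z)‖ ^ 2 ≤ (τ (star y * y)).re * (τ (star z * z)).re := by
  set B := τ (star y * z) with hB
  by_cases hB0 : B = 0
  · have h1 : 0 ≤ (τ (star y * y)).re := (Complex.nonneg_iff.mp (hpos y)).1
    have h2 : 0 ≤ (τ (star z * z)).re := (Complex.nonneg_iff.mp (hpos z)).1
    rw [hB0]
    simpa using mul_nonneg h1 h2
  · set m : ℂ := B / ‖B‖ with hm
    set y' := m • y with hy'
    have habs : (0:ℝ) < ‖B‖ := by
      simpa [norm_pos_iff] using hB0
    have hyz' : τ (star y' * z) = (‖B‖ : ℂ) := by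
      rw [hy', star_smul, smul_mul_assoc, map_smul, ← hB]
      rw [hm, smul_eq_mul, RCLike.star_def, map_div₀, Complex.conj_ofReal,
        div_mul_eq_mul_div, Complex.conj_mul', ← Complex.ofReal_pow]
      push_cast
      rw [sq]
      field_simp
    have hyy' : τ (star y' * y') = τ (star y * y) := by
      have hmm : (starRingEnd ℂ) m * m = 1 := by
        rw [Complex.conj_mul', hm]
        rw [norm_div, Complex.norm_real, Real.norm_eq_abs, abs_of_pos habs, div_self habs.ne']
        norm_num
      rw [hy', star_smul, smul_mul_assoc, mul_smul_comm, smul_smul, RCLike.star_def,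
        hmm, one_smul]
    have hp0 : 0 ≤ (τ (star y * y)).re := (Complex.nonneg_iff.mp (hpos y)).1
    have hq0 : 0 ≤ (τ (star z * z)).re := (Complex.nonneg_iff.mp (hpos z)).1
    set p := (τ (star y * y)).re
    set q := (τ (star z * z)).re
    have hzy' : (τ (star z * y')).re = ‖B‖ := by
      have h1 : star (star y' * z) = star z * y' := by
        rw [star_mul, star_star]
      have h2 := tau_star τ hpos (star y' * z)
      rw [h1, hyz'] at h2
      rw [h2]
      simp
    have key : ∀ t : ℝ, 0 ≤ p * (t * t) + (-(2 * ‖B‖)) * t + q := by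
      intro t
      have h0 := (Complex.nonneg_iff.mp (hpos (z - (t : ℂ) • y'))).1
      have hexp : star (z - (t : ℂ) • y') * (z - (t : ℂ) • y') =
          star z * z - (t : ℂ) • (star z * y') - (t : ℂ) • (star y' * z)
            + ((t : ℂ) * t) • (star y' * y') := by
        simp only [star_sub, star_smul, sub_mul, mul_sub, smul_mul_assoc,
          mul_smul_comm, smul_smul, Complex.star_def, Complex.conj_ofReal]
        module
      rw [hexp] at h0
      rw [map_add, map_sub, map_sub, map_smul, map_smul, map_smul, hyy', hyz'] at h0
      simp only [Complex.add_re, Complex.sub_re, smul_eq_mul, Complex.mul_re,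
        Complex.ofReal_re, Complex.ofReal_im, Complex.mul_im] at h0
      rw [hzy'] at h0
      nlinarith [h0]
    have hd := discrim_le_zero key
    rw [discrim] at hd
    nlinarith [hd]


lemma tau_smul_re (r : ℝ) (v : A) : (τ (r • v)).re = r * (τ v).re := by
  rw [ContinuousLinearMap.map_smul_of_tower, Complex.real_smul, Complex.mul_re]
  simp

lemma algebraMap_mono' {r r' : ℝ} (h : r ≤ r') :
    (algebraMap ℝ A) r ≤ (algebraMap ℝ A) r' := by
  rw [← sub_nonneg, ← map_sub, Algebra.algebraMap_eq_smul_one]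
  have h1A : (0:A) ≤ 1 := by simpa using star_mul_self_nonneg (1:A)
  exact smul_nonneg (sub_nonneg.mpr h) h1A

end aux

set_option maxHeartbeats 2000000 in
/-- for τ-states `σ, ρ`, `F_τ(σ, ρ) = 1` iff `σ = ρ`. -/
theorem fidelity_eq_one_iff_eq
    {A : Type*} [CStarAlgebra A] [PartialOrder A] [StarOrderedRing A]
    (τ : A →L[ℂ] ℂ)
    (htr : ∀ x y : A, τ (x * y) = τ (y * x))
    (hpos : ∀ x : A, 0 ≤ τ (star x * x))
    (hfaith : ∀ x : A, τ (star x * x) = 0 → x = 0)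
    (σ ρ : A) (hσ : 0 ≤ σ) (hσ1 : τ σ = 1) (hρ : 0 ≤ ρ) (hρ1 : τ ρ = 1) :
    fidelity τ σ ρ = 1 ↔ σ = ρ := by
  have ha : (0:A) ≤ CFC.sqrt σ := CFC.sqrt_nonneg _
  have hb : (0:A) ≤ CFC.sqrt ρ := CFC.sqrt_nonneg _
  set a := CFC.sqrt σ with ha_def
  set b := CFC.sqrt ρ with hb_def
  have hsa : star a = a := (IsSelfAdjoint.of_nonneg ha).star_eq
  have hsb : star b = b := (IsSelfAdjoint.of_nonneg hb).star_eq
  have haa : a * a = σ := CFC.sqrt_mul_sqrt_self σ hσ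
  have hbb : b * b = ρ := CFC.sqrt_mul_sqrt_self ρ hρ
  constructor
  · intro hF
    have hF' : (τ (CFC.sqrt (star (a * b) * (a * b)))).re = 1 := hF
    set s := σ - ρ with hs_def
    have hssa : IsSelfAdjoint s := by
      rw [hs_def]
      exact (IsSelfAdjoint.of_nonneg hσ).sub (IsSelfAdjoint.of_nonneg hρ)
    have hss : star s = s := hssa.star_eq
    suffices hT : τ (star s * s) = 0 by
      have h0 := hfaith s hT
      rw [hs_def] at h0
      exact sub_eq_zero.mp h0
    -- basic setup
    set x := a * b with hx_def
    have hxs : star x = b * a := by rw [hx_def, star_mul, hsa, hsb]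
    set c := CFC.sqrt (star x * x) with hc_def
    have hxx0 : (0:A) ≤ star x * x := star_mul_self_nonneg x
    have hc0 : (0:A) ≤ c := CFC.sqrt_nonneg _
    have hcsa : star c = c := (IsSelfAdjoint.of_nonneg hc0).star_eq
    have hcc : c * c = star x * x := CFC.sqrt_mul_sqrt_self _ hxx0
    have hcre : (τ c).re = 1 := hF'
    have h1A : (0:A) ≤ 1 := by simpa using star_mul_self_nonneg (1:A)
    set M := (τ 1).re with hM_def
    have hM0 : 0 ≤ M := (Complex.nonneg_iff.mp (tau_nonneg τ hpos h1A)).1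
    set T := (τ (star s * s)).re with hT_def
    have hT0 : 0 ≤ τ (star s * s) := hpos s
    have hTnn : 0 ≤ T := (Complex.nonneg_iff.mp hT0).1
    set C₂ : ℝ := (2 * ‖ρ‖ + 2 * ‖a‖ ^ 2) * (2 * M) with hC2_def
    have hC2nn : 0 ≤ C₂ := by positivity
    have key : ∀ ε : ℝ, 0 < ε →
        T ≤ (‖s‖ * Real.sqrt (M * C₂) + Real.sqrt (T * C₂)) * Real.sqrt ε := by
      intro ε hε
      have hspec : ∀ t ∈ spectrum ℝ c, (0:ℝ) ≤ t := fun t ht =>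
        spectrum_nonneg_of_nonneg hc0 ht
      have hne : ∀ t ∈ spectrum ℝ c, t + ε ≠ 0 := fun t ht => by
        have := hspec t ht; positivity
      set f0 : ℝ → ℝ := fun t => (t + ε)⁻¹ with hf0_def
      have hcont0 : ContinuousOn f0 (spectrum ℝ c) :=
        ContinuousOn.inv₀ (by fun_prop) hne
      set e := cfc f0 c with he_def
      have hesa : IsSelfAdjoint e := cfc_predicate f0 c
      have he0 : (0:A) ≤ e := cfc_nonneg (fun t ht => by
        have := hspec t ht
        rw [hf0_def]
        positivity)
      set u := x * e with hu_def
      have hus : star u = e * (b * a) := by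
        rw [hu_def, star_mul, hesa.star_eq, hxs]
      -- cfc identities
      have hccfc : c * c = cfc (fun t : ℝ => t * t) c := by
        rw [cfc_mul (fun t : ℝ => t) (fun t : ℝ => t) c (by fun_prop) (by fun_prop),
          cfc_id' ℝ c]
      have hecc : e * (c * c) = cfc (fun t : ℝ => f0 t * (t * t)) c := by
        rw [cfc_mul f0 (fun t : ℝ => t * t) c hcont0 (by fun_prop), ← hccfc]
      set G := cfc (fun t : ℝ => ε * (t * f0 t)) c with hG_def
      have hG0 : (0:A) ≤ G := cfc_nonneg (fun t ht => by
        have := hspec t ht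
        rw [hf0_def]
        positivity)
      have hGe : G ≤ algebraMap ℝ A ε := cfc_le_algebraMap _ ε c
        (fun t ht => by
          have h1 := hspec t ht
          have h2 : 0 < t + ε := by positivity
          rw [hf0_def]
          rw [show ε * (t * (t + ε)⁻¹) = ε * (t / (t + ε)) from by ring]
          nlinarith [(div_le_one h2).mpr (by linarith : t ≤ t + ε),
            div_nonneg h1 h2.le])
        (by fun_prop (disch := exact hne))
      -- decomposition c = e*(c*c) + G
      have hsplit : c = e * (c * c) + G := by
        have hadd := cfc_add (a := c) (fun t : ℝ => f0 t * (t * t))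
          (fun t : ℝ => ε * (t * f0 t)) (by fun_prop (disch := exact hne))
          (by fun_prop (disch := exact hne))
        rw [hecc, hG_def, ← hadd]
        conv_lhs => rw [← cfc_id' ℝ c]
        exact cfc_congr (fun t ht => by
          have h := hne t ht
          rw [hf0_def]
          field_simp)
      -- trace lower bound for e*(c*c)
      have hτecc : 1 - ε * M ≤ (τ (e * (c * c))).re := by
        have h1 : τ c = τ (e * (c * c)) + τ G := by
          conv_lhs => rw [hsplit]
          rw [map_add]
        have hGM : (τ G).re ≤ ε * M := by
          have h2 := tau_mono τ hpos hGe
          have h3 : τ (algebraMap ℝ A ε) = ε • τ (1:A) := by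
            rw [Algebra.algebraMap_eq_smul_one, ContinuousLinearMap.map_smul_of_tower]
          have h4 : (ε • τ (1:A)).re = ε * M := by
            rw [Complex.real_smul, Complex.mul_re]
            simp [hM_def]
          rw [h3, h4] at h2
          exact h2
        have hG0' : 0 ≤ (τ G).re := (Complex.nonneg_iff.mp (tau_nonneg τ hpos hG0)).1
        have h3 : (τ c).re = (τ (e * (c * c))).re + (τ G).re := by
          rw [h1, Complex.add_re]
        rw [hcre] at h3
        linarith
      -- cyclic identity
      set w := star u * a with hw_def
      have hcyc : τ (e * (c * c)) = τ (b * w) := by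
        have h1 : e * (c * c) = (e * (b * a) * a) * b := by
          rw [hcc, hxs, hx_def]
          noncomm_ring
        have h2 : b * (e * (b * a) * a) = b * w := by rw [hw_def, hus]
        rw [h1, htr, h2]
      have hbw : 1 - ε * M ≤ (τ (b * w)).re := by rw [← hcyc]; exact hτecc
      -- u is a contraction
      have huu : star u * u ≤ 1 := by
        have h1 : star u * u = cfc (fun t : ℝ => f0 t * (t * t) * f0 t) c := by
          have h2 : star u * u = (e * (c * c)) * e := by
            rw [hus, hu_def, hcc, hxs]
            noncomm_ring
          rw [h2, hecc, ← cfc_mul _ f0 c (by fun_prop (disch := exact hne)) hcont0]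
        rw [h1]
        refine cfc_le_one _ _ (fun t ht => ?_)
        have h3 := hspec t ht
        have h4 : 0 < t + ε := by positivity
        have h5 : f0 t * (t * t) * f0 t = (t / (t + ε)) ^ 2 := by
          rw [hf0_def]
          field_simp
        rw [h5]
        exact pow_le_one₀ (by positivity) ((div_le_one h4).mpr (by linarith))
      have hu0 : (0:A) ≤ star u * u := star_mul_self_nonneg u
      have hun : ‖u‖ ≤ 1 := by
        have h := (CStarAlgebra.norm_le_one_iff_of_nonneg _ hu0).mpr huu
        rw [CStarRing.norm_star_mul_self] at h
        nlinarith [norm_nonneg u]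
      have huus : u * star u ≤ 1 :=
        calc u * star u ≤ algebraMap ℝ A (‖u‖ ^ 2) :=
              CStarAlgebra.mul_star_le_algebraMap_norm_sq
        _ ≤ algebraMap ℝ A 1 := algebraMap_mono' (by nlinarith [norm_nonneg u])
        _ = 1 := map_one _
      -- norm bound on w
      have hsw : star w = a * u := by rw [hw_def, star_mul, star_star, hsa]
      have hwa : ‖w‖ ≤ ‖a‖ := by
        calc ‖w‖ ≤ ‖star u‖ * ‖a‖ := norm_mul_le _ _
        _ ≤ 1 * ‖a‖ := by rw [norm_star]; exact mul_le_mul_of_nonneg_right hun (norm_nonneg a)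
        _ = ‖a‖ := one_mul _
      -- ‖w‖₂ ≤ 1
      have hww : (τ (star w * w)).re ≤ 1 := by
        have h1 : star w * w = a * (u * star u) * a := by
          rw [hsw, hw_def]
          noncomm_ring
        have h2 : a * (u * star u) * a ≤ a * 1 * a := by
          have h3 := star_left_conjugate_le_conjugate huus a
          rwa [hsa] at h3
        have h4 := tau_mono τ hpos (h1 ▸ h2)
        rw [mul_one, haa] at h4
        have h5 : (τ σ).re = 1 := by rw [hσ1]; simp
        linarith
      -- the 2-norm of D = b - w is small
      set D := b - w with hD_def
      have hsD : star D = b - a * u := by rw [hD_def, star_sub, hsb, hsw]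
      have hb2 : (τ (b * b)).re = 1 := by rw [hbb, hρ1]; simp
      have hDD : (τ (star D * D)).re ≤ 2 * (ε * M) := by
        have hexp : star D * D = b * b - b * w - (a * u) * b + (a * u) * w := by
          rw [hsD, hD_def]
          noncomm_ring
        have haub : (τ ((a * u) * b)).re = (τ (b * w)).re := by
          have h1 : star ((a * u) * b) = b * w := by
            rw [star_mul, star_mul, hsb, hsa, ← hw_def]
          have h2 := tau_star τ hpos ((a * u) * b)
          rw [h1] at h2
          rw [h2]
          simp
        have hauw : (τ ((a * u) * w)).re ≤ 1 := by
          rw [show (a * u) * w = star w * w from by rw [hsw]]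
          exact hww
        have h3 : (τ (star D * D)).re =
            (τ (b * b)).re - (τ (b * w)).re - (τ ((a * u) * b)).re
              + (τ ((a * u) * w)).re := by
          rw [hexp, map_add, map_sub, map_sub, Complex.add_re, Complex.sub_re,
            Complex.sub_re]
        rw [h3, haub, hb2]
        linarith
      have hDD0 : 0 ≤ (τ (star D * D)).re :=
        (Complex.nonneg_iff.mp (hpos D)).1
      -- decomposition of ρ - a (u u*) a
      set rr := ρ - a * (u * star u) * a with hrr_def
      have hrr_eq : rr = b * D + (star D) * w := by
        rw [hrr_def, hsD, hD_def, hw_def, ← hbb]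
        noncomm_ring
      -- parallelogram-type bound
      have hsum : (τ (star rr * rr)).re ≤
          2 * (τ (star (b * D) * (b * D))).re
            + 2 * (τ (star ((star D) * w) * ((star D) * w))).re := by
        have hstar_bD : star (b * D) = star D * b := by rw [star_mul, hsb]
        have hstar_Dw : star ((star D) * w) = star w * D := by rw [star_mul, star_star]
        have hstar_rr : star rr = star D * b + star w * D := by
          rw [hrr_eq, star_add, hstar_bD, hstar_Dw]
        have hstar_sub : star (b * D - (star D) * w) = star D * b - star w * D := by
          rw [star_sub, hstar_bD, hstar_Dw]
        have h0 : star rr * rr = (star D * b + star w * D) * (b * D + (star D) * w) := by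
          rw [hstar_rr]
          conv_lhs => rw [hrr_eq]
        have h0' : star (b * D - (star D) * w) * (b * D - (star D) * w)
            = (star D * b - star w * D) * (b * D - (star D) * w) := by rw [hstar_sub]
        have hpar : (star D * b + star w * D) * (b * D + (star D) * w)
            + (star D * b - star w * D) * (b * D - (star D) * w)
            = (star (b * D) * (b * D) + star (b * D) * (b * D))
              + (star ((star D) * w) * ((star D) * w)
                + star ((star D) * w) * ((star D) * w)) := by
          rw [hstar_bD, hstar_Dw]
          noncomm_ring
        have h4 := congrArg τ hpar
        simp only [map_add] at h4
        have h5 := congrArg Complex.re h4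
        simp only [Complex.add_re] at h5
        rw [← h0, ← h0'] at h5
        have h2 : 0 ≤ (τ (star (b * D - (star D) * w) * (b * D - (star D) * w))).re :=
          (Complex.nonneg_iff.mp (hpos _)).1
        linarith
      -- componentwise bounds
      have hbD : (τ (star (b * D) * (b * D))).re ≤ ‖ρ‖ * (τ (star D * D)).re := by
        have h1 : star (b * D) * (b * D) = star D * (b * b) * D := by
          rw [star_mul, hsb]
          noncomm_ring
        have h2 : star D * (b * b) * D ≤ star D * (algebraMap ℝ A ‖ρ‖) * D := by
          refine star_left_conjugate_le_conjugate ?_ D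
          rw [hbb]
          exact IsSelfAdjoint.le_algebraMap_norm_self (IsSelfAdjoint.of_nonneg hρ)
        have h3 : star D * (algebraMap ℝ A ‖ρ‖) * D = ‖ρ‖ • (star D * D) := by
          rw [Algebra.algebraMap_eq_smul_one, mul_smul_comm, mul_one, smul_mul_assoc]
        have h4 := tau_mono τ hpos (h1 ▸ h2)
        rw [h3, tau_smul_re τ] at h4
        exact h4
      have hDw : (τ (star ((star D) * w) * ((star D) * w))).re
          ≤ ‖a‖ ^ 2 * (τ (star D * D)).re := by
        have e1 : star ((star D) * w) * ((star D) * w) = (star w * D) * ((star D) * w) := by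
          rw [star_mul, star_star]
        have e2 : ((star D) * w) * (star w * D) = star D * (w * star w) * D := by
          noncomm_ring
        have h1 : τ (star ((star D) * w) * ((star D) * w))
            = τ (star D * (w * star w) * D) := by
          rw [e1, htr, e2]
        have h2 : w * star w ≤ algebraMap ℝ A (‖a‖ ^ 2) := by
          calc w * star w ≤ algebraMap ℝ A (‖w‖ ^ 2) :=
                CStarAlgebra.mul_star_le_algebraMap_norm_sq
          _ ≤ _ := algebraMap_mono' (by nlinarith [norm_nonneg w, norm_nonneg a])
        have h3 := star_left_conjugate_le_conjugate h2 D
        have h5 : star D * (algebraMap ℝ A (‖a‖ ^ 2)) * D = (‖a‖ ^ 2) • (star D * D) := by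
          rw [Algebra.algebraMap_eq_smul_one, mul_smul_comm, mul_one, smul_mul_assoc]
        have h6 := tau_mono τ hpos h3
        rw [h5, tau_smul_re τ] at h6
        rw [h1]
        exact h6
      -- combine: ‖rr‖₂² ≤ C₂ ε
      have hrr2 : (τ (star rr * rr)).re ≤ C₂ * ε := by
        rw [hC2_def]
        nlinarith [hsum, hbD, hDw, hDD, hDD0,
          mul_le_mul_of_nonneg_left hDD (norm_nonneg ρ),
          mul_le_mul_of_nonneg_left hDD (sq_nonneg ‖a‖)]
      have hrr0 : 0 ≤ (τ (star rr * rr)).re := (Complex.nonneg_iff.mp (hpos rr)).1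
      -- the positive remainder q
      set q := σ - a * (u * star u) * a with hq_def
      have hq0 : (0:A) ≤ q := by
        have h1 : (0:A) ≤ 1 - u * star u := sub_nonneg.mpr huus
        have h2 := star_left_conjugate_nonneg h1 a
        rw [hsa] at h2
        have h3 : a * (1 - u * star u) * a = q := by
          rw [hq_def, ← haa]
          noncomm_ring
        rwa [h3] at h2
      have hqre0 : 0 ≤ (τ q).re := (Complex.nonneg_iff.mp (tau_nonneg τ hpos hq0)).1
      have hqrr : τ q = τ rr := by
        rw [hq_def, hrr_def, map_sub, map_sub, hσ1, hρ1]
      have hqbound : (τ q).re ^ 2 ≤ M * (C₂ * ε) := by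
        have hcs := tau_cs τ hpos 1 rr
        rw [star_one, one_mul, mul_one] at hcs
        have h1 : (τ q).re ≤ ‖τ rr‖ := by
          rw [hqrr]
          exact Complex.re_le_norm _
        have h2 := pow_le_pow_left₀ hqre0 h1 2
        have h3 := mul_le_mul_of_nonneg_left hrr2 hM0
        linarith
      -- split and bound T
      have hTsplit : T ≤ ‖s‖ * (τ q).re + ‖τ (s * rr)‖ := by
        have h1 : star s * s = s * q - s * rr := by
          rw [hss, hq_def, hrr_def, hs_def]
          noncomm_ring
        have h2 : (τ (s * q)).re ≤ ‖s‖ * (τ q).re := by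
          have haq0 : (0:A) ≤ CFC.sqrt q := CFC.sqrt_nonneg _
          set aq := CFC.sqrt q with haq_def
          have haq : aq * aq = q := CFC.sqrt_mul_sqrt_self q hq0
          have hsaq : star aq = aq := (IsSelfAdjoint.of_nonneg haq0).star_eq
          have hcyc2 : τ (s * q) = τ (aq * s * aq) := by
            conv_lhs => rw [← haq]
            rw [show s * (aq * aq) = (s * aq) * aq from by noncomm_ring, htr,
              ← mul_assoc]
          have hle : aq * s * aq ≤ aq * (algebraMap ℝ A ‖s‖) * aq := by
            have h3 := star_left_conjugate_le_conjugate
              (IsSelfAdjoint.le_algebraMap_norm_self hssa) aq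
            rwa [hsaq] at h3
          have h4 : aq * (algebraMap ℝ A ‖s‖) * aq = ‖s‖ • q := by
            rw [Algebra.algebraMap_eq_smul_one, mul_smul_comm, mul_one,
              smul_mul_assoc, haq]
          have h5 := tau_mono τ hpos hle
          rw [h4, tau_smul_re τ] at h5
          rw [hcyc2]
          exact h5
        have h6 : -(τ (s * rr)).re ≤ ‖τ (s * rr)‖ := by
          have h7 := Complex.abs_re_le_norm (τ (s * rr))
          have h8 := neg_abs_le ((τ (s * rr)).re)
          linarith
        have h7 : T = (τ (s * q)).re - (τ (s * rr)).re := by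
          rw [hT_def, h1, map_sub, Complex.sub_re]
        linarith
      have hsrr2 : ‖τ (s * rr)‖ ^ 2 ≤ T * (C₂ * ε) := by
        have hcs := tau_cs τ hpos s rr
        rw [hss] at hcs
        have hTeq : (τ (s * s)).re = T := by rw [hT_def, hss]
        rw [hTeq] at hcs
        nlinarith [mul_le_mul_of_nonneg_left hrr2 hTnn]
      -- assemble
      have hs1 : (τ q).re ≤ Real.sqrt (M * C₂) * Real.sqrt ε := by
        calc (τ q).re = Real.sqrt ((τ q).re ^ 2) := (Real.sqrt_sq hqre0).symm
        _ ≤ Real.sqrt ((M * C₂) * ε) := Real.sqrt_le_sqrt (by nlinarith [hqbound])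
        _ = Real.sqrt (M * C₂) * Real.sqrt ε := Real.sqrt_mul (by positivity) ε
      have hs2 : ‖τ (s * rr)‖ ≤ Real.sqrt (T * C₂) * Real.sqrt ε := by
        calc ‖τ (s * rr)‖
            = Real.sqrt (‖τ (s * rr)‖ ^ 2) :=
              (Real.sqrt_sq (norm_nonneg _)).symm
        _ ≤ Real.sqrt ((T * C₂) * ε) := Real.sqrt_le_sqrt (by nlinarith [hsrr2])
        _ = Real.sqrt (T * C₂) * Real.sqrt ε := Real.sqrt_mul (by positivity) ε
      calc T ≤ ‖s‖ * (τ q).re + ‖τ (s * rr)‖ := hTsplit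
      _ ≤ ‖s‖ * (Real.sqrt (M * C₂) * Real.sqrt ε)
            + Real.sqrt (T * C₂) * Real.sqrt ε := by
          have h9 := mul_le_mul_of_nonneg_left hs1 (norm_nonneg s)
          linarith
      _ = (‖s‖ * Real.sqrt (M * C₂) + Real.sqrt (T * C₂)) * Real.sqrt ε := by ring
    -- conclude T = 0
    have hTz : T = 0 := by
      by_contra hne
      have hTpos : 0 < T := lt_of_le_of_ne hTnn (Ne.symm hne)
      set C : ℝ := ‖s‖ * Real.sqrt (M * C₂) + Real.sqrt (T * C₂) with hC_def
      have hC0 : 0 ≤ C := by positivity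
      have h1 := key ((T / (C + 1)) ^ 2) (by positivity)
      rw [Real.sqrt_sq (by positivity)] at h1
      have h2 : C * (T / (C + 1)) < T := by
        rw [← mul_div_assoc, div_lt_iff₀ (by positivity)]
        nlinarith
      linarith
    -- finish: τ (star s * s) = 0
    apply Complex.ext
    · exact hTz
    · exact ((Complex.nonneg_iff.mp hT0).2).symm
  · intro h
    subst h
    show (τ (CFC.sqrt (star (a * a) * (a * a)))).re = 1
    have h1 : star (a * a) * (a * a) = σ ^ 2 := by
      rw [star_mul, hsa, haa, sq]
    rw [h1, CFC.sqrt_sq σ hσ, hσ1]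
    simp
end

section
/- Let A be a unital C*-algebra and τ : A → ℂ a faithful positive tracial continuous linear functional. If a positive linear map E : A → A preserves τ-fidelity and is surjective, then E is an order isomorphism: E is bijective and the inverse linear map E⁻¹ is also positive. -/
open scoped ComplexOrder ComplexStarModule

section Helpers

variable {A : Type*} [CStarAlgebra A] [PartialOrder A] [StarOrderedRing A]

lemma aux_smul_nonneg {r : ℝ} (hr : 0 ≤ r) {a : A} (ha : 0 ≤ a) :
    0 ≤ (r : ℂ) • a := by
  set s : ℝ := Real.sqrt r with hs
  have key : (r : ℂ) • a = star ((s : ℂ) • CFC.sqrt a) * ((s : ℂ) • CFC.sqrt a) := by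
    rw [star_smul, (IsSelfAdjoint.of_nonneg (CFC.sqrt_nonneg (a := a))).star_eq,
      smul_mul_smul_comm, CFC.sqrt_mul_sqrt_self a ha]
    congr 1
    rw [Complex.star_def, Complex.conj_ofReal, ← Complex.ofReal_mul, Real.mul_self_sqrt hr]
  rw [key]
  exact star_mul_self_nonneg _

lemma aux_sqrt_orthogonal {a b : A} (ha : 0 ≤ a) (hb : 0 ≤ b) (hab : a * b = 0) :
    CFC.sqrt a * CFC.sqrt b = 0 := by
  have hsa := (IsSelfAdjoint.of_nonneg (CFC.sqrt_nonneg (a := a))).star_eq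
  have hsb := (IsSelfAdjoint.of_nonneg (CFC.sqrt_nonneg (a := b))).star_eq
  have h1 : a * CFC.sqrt b = 0 := by
    rw [← CStarRing.mul_star_self_eq_zero_iff]
    rw [star_mul, hsb, (IsSelfAdjoint.of_nonneg ha).star_eq]
    calc a * CFC.sqrt b * (CFC.sqrt b * a) = a * (CFC.sqrt b * CFC.sqrt b) * a := by
          simp only [mul_assoc]
    _ = 0 := by rw [CFC.sqrt_mul_sqrt_self b hb, hab, zero_mul]
  rw [← CStarRing.star_mul_self_eq_zero_iff, star_mul, hsa, hsb]
  calc CFC.sqrt b * CFC.sqrt a * (CFC.sqrt a * CFC.sqrt b)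
      = CFC.sqrt b * (CFC.sqrt a * CFC.sqrt a) * CFC.sqrt b := by simp only [mul_assoc]
  _ = CFC.sqrt b * a * CFC.sqrt b := by rw [CFC.sqrt_mul_sqrt_self a ha]
  _ = 0 := by
      have h2 : CFC.sqrt b * a = 0 := by
        have := congrArg star h1
        rwa [star_mul, hsb, (IsSelfAdjoint.of_nonneg ha).star_eq, star_zero] at this
      rw [h2, zero_mul]

end Helpers

section TauHelpers
variable {A : Type*} [CStarAlgebra A] [PartialOrder A] [StarOrderedRing A]
  (τ : A →L[ℂ] ℂ)

lemma aux_tau_nonneg (hpos : ∀ x : A, 0 ≤ τ (star x * x)) {a : A} (ha : 0 ≤ a) :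
    0 ≤ τ a := by
  have : a = star (CFC.sqrt a) * CFC.sqrt a := by
    rw [(IsSelfAdjoint.of_nonneg (CFC.sqrt_nonneg (a := a))).star_eq,
      CFC.sqrt_mul_sqrt_self a ha]
  rw [this]; exact hpos _

lemma aux_tau_eq_zero (hfaith : ∀ x : A, τ (star x * x) = 0 → x = 0)
    {a : A} (ha : 0 ≤ a) (h : τ a = 0) : a = 0 := by
  have hrw : star (CFC.sqrt a) * CFC.sqrt a = a := by
    rw [(IsSelfAdjoint.of_nonneg (CFC.sqrt_nonneg (a := a))).star_eq,
      CFC.sqrt_mul_sqrt_self a ha]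
  have := hfaith (CFC.sqrt a) (by rw [hrw]; exact h)
  rw [← CFC.sqrt_mul_sqrt_self a ha, this, mul_zero]

lemma aux_tau_eq_re (hpos : ∀ x : A, 0 ≤ τ (star x * x)) {a : A} (ha : 0 ≤ a) :
    τ a = ((τ a).re : ℂ) := by
  have := (Complex.nonneg_iff.mp (aux_tau_nonneg τ hpos ha)).2
  exact Complex.ext rfl this.symm

lemma aux_cstarAbs_of_nonneg {a : A} (ha : 0 ≤ a) : cstarAbs a = a := by
  rw [cstarAbs, (IsSelfAdjoint.of_nonneg ha).star_eq, CFC.sqrt_mul_self a ha]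

lemma aux_fidelity_self (hpos : ∀ x : A, 0 ≤ τ (star x * x)) {a : A} (ha : 0 ≤ a) :
    fidelity τ a a = (τ a).re := by
  rw [fidelity, CFC.sqrt_mul_sqrt_self a ha, aux_cstarAbs_of_nonneg ha]

lemma aux_fidelity_orth {a b : A} (ha : 0 ≤ a) (hb : 0 ≤ b) (hab : a * b = 0) :
    fidelity τ a b = 0 := by
  rw [fidelity, aux_sqrt_orthogonal ha hb hab]
  have : cstarAbs (0 : A) = 0 := by rw [cstarAbs, star_zero, mul_zero, CFC.sqrt_zero]
  rw [this, map_zero, Complex.zero_re]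

lemma aux_fidelity_eq_zero (hpos : ∀ x : A, 0 ≤ τ (star x * x))
    (hfaith : ∀ x : A, τ (star x * x) = 0 → x = 0)
    {a b : A} (h : fidelity τ a b = 0) :
    CFC.sqrt a * CFC.sqrt b = 0 := by
  set y := CFC.sqrt a * CFC.sqrt b with hy
  have habs : (0 : A) ≤ cstarAbs y := CFC.sqrt_nonneg _
  have htau : τ (cstarAbs y) = 0 := by
    rw [aux_tau_eq_re τ hpos habs]
    rw [fidelity, ← hy] at h
    rw [h, Complex.ofReal_zero]
  have h0 : cstarAbs y = 0 := aux_tau_eq_zero τ hfaith habs htau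
  have : star y * y = 0 := by
    rw [← CFC.sqrt_mul_sqrt_self (star y * y) (star_mul_self_nonneg y), ← cstarAbs, h0,
      mul_zero]
  exact (CStarRing.star_mul_self_eq_zero_iff y).mp this

end TauHelpers

/-- a surjective positive linear map preserving τ-fidelity is an order
isomorphism: it is bijective and its inverse is positive. -/
theorem order_isomorphism_of_surjective_preserves_fidelity
    {A : Type*} [CStarAlgebra A] [PartialOrder A] [StarOrderedRing A]
    (τ : A →L[ℂ] ℂ)
    (htr : ∀ x y : A, τ (x * y) = τ (y * x))
    (hpos : ∀ x : A, 0 ≤ τ (star x * x))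
    (hfaith : ∀ x : A, τ (star x * x) = 0 → x = 0)
    (E : A →ₗ[ℂ] A)
    (hE : ∀ x : A, 0 ≤ x → 0 ≤ E x)
    (hEτ : ∀ x : A, τ (E x) = τ x)
    (hEfid : ∀ σ ρ : A, 0 ≤ σ → τ σ = 1 → 0 ≤ ρ → τ ρ = 1 →
      fidelity τ (E σ) (E ρ) = fidelity τ σ ρ)
    (hsurj : Function.Surjective E) :
    Function.Bijective E ∧ ∀ x : A, 0 ≤ E x → 0 ≤ x := by
  -- E preserves selfadjointness
  have hEsa : ∀ s : A, IsSelfAdjoint s → IsSelfAdjoint (E s) := by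
    intro s hs
    have h1 : E s = E (s⁺) - E (s⁻) := by rw [← map_sub, CFC.posPart_sub_negPart s hs]
    rw [h1]
    exact ((hE _ (CFC.posPart_nonneg s)).isSelfAdjoint).sub
      ((hE _ (CFC.negPart_nonneg s)).isSelfAdjoint)
  -- E is star-preserving
  have hEstar : ∀ x : A, E (star x) = star (E x) := by
    intro x
    have hdecomp : x = (ℜ x : A) + Complex.I • (ℑ x : A) :=
      (realPart_add_I_smul_imaginaryPart x).symm
    have hstarx : star x = (ℜ x : A) - Complex.I • (ℑ x : A) := by
      conv_lhs => rw [hdecomp]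
      rw [star_add, star_smul, Complex.star_def, Complex.conj_I,
        ((ℜ x).property).star_eq, ((ℑ x).property).star_eq, neg_smul, ← sub_eq_add_neg]
    rw [hstarx]
    conv_rhs => rw [hdecomp]
    rw [map_sub, map_smul, map_add, map_smul, star_add, star_smul, Complex.star_def,
      Complex.conj_I, (hEsa _ (ℜ x).property).star_eq, (hEsa _ (ℑ x).property).star_eq,
      neg_smul, ← sub_eq_add_neg]
  -- injectivity on selfadjoint kernel elements
  have hinjsa : ∀ s : A, IsSelfAdjoint s → E s = 0 → s = 0 := by
    intro s hs h0
    have hpdecomp : s⁺ - s⁻ = s := CFC.posPart_sub_negPart s hs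
    have hp := CFC.posPart_nonneg s
    have hn := CFC.negPart_nonneg s
    have hEpn : E (s⁺) = E (s⁻) := by
      have h1 : E (s⁺) - E (s⁻) = 0 := by rw [← map_sub, hpdecomp, h0]
      exact sub_eq_zero.mp h1
    have htpn : τ (s⁺) = τ (s⁻) := by rw [← hEτ (s⁺), ← hEτ (s⁻), hEpn]
    by_cases hzero : τ (s⁺) = 0
    · have h1 : s⁺ = 0 := aux_tau_eq_zero τ hfaith hp hzero
      have h2 : s⁻ = 0 := aux_tau_eq_zero τ hfaith hn (htpn ▸ hzero)
      rw [← hpdecomp, h1, h2, sub_zero]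
    · exfalso
      set t : ℝ := (τ (s⁺)).re with htdef
      have hre : τ (s⁺) = (t : ℂ) := aux_tau_eq_re τ hpos hp
      have htne : t ≠ 0 := fun hc => hzero (by rw [hre, hc, Complex.ofReal_zero])
      have htpos : 0 < t :=
        lt_of_le_of_ne (Complex.nonneg_iff.mp (aux_tau_nonneg τ hpos hp)).1 (Ne.symm htne)
      set c : ℂ := ((t⁻¹ : ℝ) : ℂ) with hcdef
      have hσ : 0 ≤ c • s⁺ := aux_smul_nonneg (inv_nonneg.mpr htpos.le) hp
      have hρ : 0 ≤ c • s⁻ := aux_smul_nonneg (inv_nonneg.mpr htpos.le) hn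
      have hτσ : τ (c • s⁺) = 1 := by
        rw [map_smul, smul_eq_mul, hre, hcdef, ← Complex.ofReal_mul,
          inv_mul_cancel₀ htne, Complex.ofReal_one]
      have hτρ : τ (c • s⁻) = 1 := by
        rw [map_smul, smul_eq_mul, ← htpn, hre, hcdef, ← Complex.ofReal_mul,
          inv_mul_cancel₀ htne, Complex.ofReal_one]
      have hfid := hEfid _ _ hσ hτσ hρ hτρ
      have hrhs : fidelity τ (c • s⁺) (c • s⁻) = 0 :=
        aux_fidelity_orth τ hσ hρ
          (by rw [smul_mul_smul_comm, CFC.posPart_mul_negPart, smul_zero])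
      have hlhs : fidelity τ (E (c • s⁺)) (E (c • s⁻)) = 1 := by
        have hEρ : 0 ≤ E (c • s⁻) := hE _ hρ
        have hEE : E (c • s⁺) = E (c • s⁻) := by rw [map_smul, map_smul, hEpn]
        rw [hEE, aux_fidelity_self τ hpos hEρ, hEτ, hτρ, Complex.one_re]
      have : (1 : ℝ) = 0 := by rw [← hlhs, hfid, hrhs]
      exact one_ne_zero this
  -- injectivity
  have hker : ∀ z : A, E z = 0 → z = 0 := by
    intro z hz
    have hz' : E (star z) = 0 := by rw [hEstar, hz, star_zero]
    have h1 : E (z + star z) = 0 := by rw [map_add, hz, hz', add_zero]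
    have h2 : E (Complex.I • (z - star z)) = 0 := by
      rw [map_smul, map_sub, hz, hz', sub_zero, smul_zero]
    have hsa1 : IsSelfAdjoint (z + star z) := by
      rw [IsSelfAdjoint, star_add, star_star, add_comm]
    have hsa2 : IsSelfAdjoint (Complex.I • (z - star z)) := by
      rw [IsSelfAdjoint, star_smul, Complex.star_def, Complex.conj_I, star_sub, star_star,
        neg_smul, ← smul_neg, neg_sub]
    have e1 : z + star z = 0 := hinjsa _ hsa1 h1
    have e2 : Complex.I • (z - star z) = 0 := hinjsa _ hsa2 h2
    have e2' : z - star z = 0 := (smul_eq_zero.mp e2).resolve_left Complex.I_ne_zero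
    have h2z : (2 : ℂ) • z = 0 := by
      have : (2 : ℂ) • z = (z + star z) + (z - star z) := by
        rw [two_smul]; abel
      rw [this, e1, e2', add_zero]
    exact (smul_eq_zero.mp h2z).resolve_left two_ne_zero
  have hinj : Function.Injective E := by
    intro x y hxy
    have := hker (x - y) (by rw [map_sub, hxy, sub_self])
    exact sub_eq_zero.mp this
  refine ⟨⟨hinj, hsurj⟩, ?_⟩
  -- inverse positivity
  intro x hx
  have hxsa : IsSelfAdjoint x := hinj (by rw [hEstar, (hx.isSelfAdjoint).star_eq])
  have hpdecomp : x⁺ - x⁻ = x := CFC.posPart_sub_negPart x hxsa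
  have hp := CFC.posPart_nonneg x
  have hn := CFC.negPart_nonneg x
  have hle : E (x⁻) ≤ E (x⁺) := by
    have h1 : 0 ≤ E (x⁺) - E (x⁻) := by rw [← map_sub, hpdecomp]; exact hx
    exact sub_nonneg.mp h1
  suffices hnz : x⁻ = 0 by rw [← hpdecomp, hnz, sub_zero]; exact hp
  by_cases hzn : τ (x⁻) = 0
  · exact aux_tau_eq_zero τ hfaith hn hzn
  exfalso
  by_cases hzp : τ (x⁺) = 0
  · have hp0 : x⁺ = 0 := aux_tau_eq_zero τ hfaith hp hzp
    have hEn0 : E (x⁻) = 0 := by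
      refine le_antisymm ?_ (hE _ hn)
      rw [hp0, map_zero] at hle; exact hle
    exact hzn (by rw [← hEτ, hEn0, map_zero])
  · set tp : ℝ := (τ (x⁺)).re with htpdef
    set tn : ℝ := (τ (x⁻)).re with htndef
    have hrep : τ (x⁺) = (tp : ℂ) := aux_tau_eq_re τ hpos hp
    have hren : τ (x⁻) = (tn : ℂ) := aux_tau_eq_re τ hpos hn
    have htpne : tp ≠ 0 := fun hc => hzp (by rw [hrep, hc, Complex.ofReal_zero])
    have htnne : tn ≠ 0 := fun hc => hzn (by rw [hren, hc, Complex.ofReal_zero])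
    have htp : 0 < tp :=
      lt_of_le_of_ne (Complex.nonneg_iff.mp (aux_tau_nonneg τ hpos hp)).1 (Ne.symm htpne)
    have htn : 0 < tn :=
      lt_of_le_of_ne (Complex.nonneg_iff.mp (aux_tau_nonneg τ hpos hn)).1 (Ne.symm htnne)
    set cp : ℂ := ((tp⁻¹ : ℝ) : ℂ) with hcpdef
    set cn : ℂ := ((tn⁻¹ : ℝ) : ℂ) with hcndef
    have hσ : 0 ≤ cp • x⁺ := aux_smul_nonneg (inv_nonneg.mpr htp.le) hp
    have hρ : 0 ≤ cn • x⁻ := aux_smul_nonneg (inv_nonneg.mpr htn.le) hn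
    have hτσ : τ (cp • x⁺) = 1 := by
      rw [map_smul, smul_eq_mul, hrep, hcpdef, ← Complex.ofReal_mul,
        inv_mul_cancel₀ htpne, Complex.ofReal_one]
    have hτρ : τ (cn • x⁻) = 1 := by
      rw [map_smul, smul_eq_mul, hren, hcndef, ← Complex.ofReal_mul,
        inv_mul_cancel₀ htnne, Complex.ofReal_one]
    have hfid := hEfid _ _ hσ hτσ hρ hτρ
    have hrhs : fidelity τ (cp • x⁺) (cn • x⁻) = 0 :=
      aux_fidelity_orth τ hσ hρ
        (by rw [smul_mul_smul_comm, CFC.posPart_mul_negPart, smul_zero])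
    have hEσ : 0 ≤ E (cp • x⁺) := hE _ hσ
    have hEρ : 0 ≤ E (cn • x⁻) := hE _ hρ
    have hzero : CFC.sqrt (E (cp • x⁺)) * CFC.sqrt (E (cn • x⁻)) = 0 :=
      aux_fidelity_eq_zero τ hpos hfaith (hfid.trans hrhs)
    have hprod : E (cp • x⁺) * E (cn • x⁻) = 0 := by
      calc E (cp • x⁺) * E (cn • x⁻)
          = CFC.sqrt (E (cp • x⁺)) * CFC.sqrt (E (cp • x⁺)) *
            (CFC.sqrt (E (cn • x⁻)) * CFC.sqrt (E (cn • x⁻))) := by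
            rw [CFC.sqrt_mul_sqrt_self _ hEσ, CFC.sqrt_mul_sqrt_self _ hEρ]
      _ = CFC.sqrt (E (cp • x⁺)) *
            (CFC.sqrt (E (cp • x⁺)) * CFC.sqrt (E (cn • x⁻))) *
            CFC.sqrt (E (cn • x⁻)) := by simp only [mul_assoc]
      _ = 0 := by rw [hzero, mul_zero, zero_mul]
    have hEpn0 : E (x⁺) * E (x⁻) = 0 := by
      rw [map_smul, map_smul, smul_mul_smul_comm] at hprod
      have hc : cp * cn ≠ 0 := mul_ne_zero
        (by simp [hcpdef, htpne]) (by simp [hcndef, htnne])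
      exact (smul_eq_zero.mp hprod).resolve_left hc
    set w := CFC.sqrt (E (x⁻)) with hwdef
    have hws : star w = w := (IsSelfAdjoint.of_nonneg (CFC.sqrt_nonneg (a := E (x⁻)))).star_eq
    have hps : star (E (x⁺)) = E (x⁺) := (IsSelfAdjoint.of_nonneg (hE _ hp)).star_eq
    have hns : star (E (x⁻)) = E (x⁻) := (IsSelfAdjoint.of_nonneg (hE _ hn)).star_eq
    have hww : w * w = E (x⁻) := CFC.sqrt_mul_sqrt_self _ (hE _ hn)
    have h1 : E (x⁺) * w = 0 := by
      rw [← CStarRing.mul_star_self_eq_zero_iff, star_mul, hws, hps]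
      calc E (x⁺) * w * (w * E (x⁺)) = E (x⁺) * (w * w) * E (x⁺) := by
            simp only [mul_assoc]
      _ = 0 := by rw [hww, hEpn0, zero_mul]
    have h1' : w * E (x⁺) = 0 := by
      have := congrArg star h1
      rwa [star_mul, hws, hps, star_zero] at this
    have h2 : E (x⁻) * E (x⁻) ≤ 0 := by
      have hc := star_left_conjugate_le_conjugate hle w
      rw [hws] at hc
      have hl : w * E (x⁻) * w = E (x⁻) * E (x⁻) := by
        rw [← hww]; simp only [mul_assoc]
      have hr : w * E (x⁺) * w = 0 := by rw [h1', zero_mul]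
      rwa [hl, hr] at hc
    have hge : 0 ≤ E (x⁻) * E (x⁻) := by
      have := star_mul_self_nonneg (E (x⁻))
      rwa [hns] at this
    have h3 : E (x⁻) = 0 := by
      have h4 : E (x⁻) * E (x⁻) = 0 := le_antisymm h2 hge
      exact (CStarRing.star_mul_self_eq_zero_iff _).mp (by rw [hns]; exact h4)
    exact hzn (by rw [← hEτ, h3, map_zero])
end
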